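/- arXiv:0912.4935 — 3 statements merged into one kernel-verified Lean document; each statement's English description precedes it below -/
import Mathlib

section
/- For a set of m disjunctive clauses each containing exactly q distinct literals over distinct variables, there exists a truth assignment satisfying at least ⌈((2^q − 1)/2^q)·m⌉ clauses. -/
open Finset

/-- The number of Boolean functions on a finite type fixed at `q` distinct points
is `2 ^ (card α - q)`. -/
lemma count_fixed_values {α : Type*} [Fintype α] [DecidableEq α] {q : ℕ}
    (u : Fin q → α) (hu : Function.Injective u) (c : Fin q → Bool) :
    Fintype.card {f : α → Bool // ∀ t, f (u t) = c t} = 2 ^ (Fintype.card α - q) := by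
  classical
  have e : {f : α → Bool // ∀ t, f (u t) = c t} ≃ ({x : α // x ∉ Set.range u} → Bool) :=
    { toFun := fun f x => f.1 x.1
      invFun := fun g =>
        ⟨fun x => if h : ∃ t, u t = x then c h.choose else g ⟨x, by
            simpa [Set.mem_range] using h⟩, by
          intro t
          have h : ∃ t', u t' = u t := ⟨t, rfl⟩
          simp only [dif_pos h]
          have := h.choose_spec
          rw [hu this]⟩
      left_inv := by
        intro f
        ext x
        by_cases h : ∃ t, u t = x
        · simp only [dif_pos h]
          exact ((f.2 h.choose).symm.trans (congrArg f.1 h.choose_spec))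
        · simp [dif_neg h]
      right_inv := by
        intro g
        funext x
        have h : ¬ ∃ t, u t = x.1 := by
          simpa [Set.mem_range] using x.2
        simp [dif_neg h] }
  rw [Fintype.card_congr e]
  have h1 : Fintype.card {x : α // x ∉ Set.range u} = Fintype.card α - q := by
    rw [Fintype.card_subtype_compl]
    congr 1
    rw [Fintype.card_eq_nat_card, Nat.card_range_of_injective hu, Nat.card_eq_fintype_card,
      Fintype.card_fin]
  rw [Fintype.card_fun, h1, Fintype.card_bool]

/-- For `m` disjunctive clauses, each containing exactly `q` literals over `q` distinct
variables, there is a truth assignment satisfying at least `⌈((2^q - 1)/2^q) * m⌉`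
clauses; in natural numbers this count is `m - m / 2^q`. Clause `j` has variables
`vars j t` with required signs `sign j t`, and is satisfied by an assignment `a` if some
literal is true. -/
theorem exists_assignment_satisfying_many_clauses
    {V : Type*} (m q : ℕ) (hq : 1 ≤ q)
    (vars : Fin m → Fin q → V)
    (hinj : ∀ j : Fin m, Function.Injective (vars j))
    (sign : Fin m → Fin q → Bool) :
    ∃ a : V → Bool,
      m - m / 2 ^ q ≤
        (Finset.univ.filter (fun j : Fin m => ∃ t : Fin q, a (vars j t) = sign j t)).card := by
  classical
  rcases Nat.eq_zero_or_pos m with rfl | hm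
  · exact ⟨fun _ => false, by simp⟩
  -- the finite set of variables used
  set s : Finset V := Finset.image (fun p : Fin m × Fin q => vars p.1 p.2) Finset.univ with hs
  have hmem : ∀ j t, vars j t ∈ s := by
    intro j t
    exact Finset.mem_image.2 ⟨(j, t), Finset.mem_univ _, rfl⟩
  set n : ℕ := Fintype.card {x // x ∈ s} with hn
  -- q ≤ n
  have hqn : q ≤ n := by
    have j0 : Fin m := ⟨0, hm⟩
    have : Function.Injective (fun t : Fin q => (⟨vars j0 t, hmem j0 t⟩ : {x // x ∈ s})) := by
      intro t t' h
      exact hinj j0 (congrArg Subtype.val h)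
    calc q = Fintype.card (Fin q) := (Fintype.card_fin q).symm
      _ ≤ n := Fintype.card_le_of_injective _ this
  -- bad predicate: clause j unsatisfied under g
  let bad : Fin m → ({x // x ∈ s} → Bool) → Prop :=
    fun j g => ∀ t, g ⟨vars j t, hmem j t⟩ = !sign j t
  -- for each j, the number of g with bad j g is 2^(n-q)
  have hcount : ∀ j : Fin m,
      (Finset.univ.filter (fun g : {x // x ∈ s} → Bool => bad j g)).card = 2 ^ (n - q) := by
    intro j
    rw [← Fintype.card_subtype]
    exact count_fixed_values (fun t => (⟨vars j t, hmem j t⟩ : {x // x ∈ s}))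
      (fun t t' h => hinj j (congrArg Subtype.val h)) (fun t => !sign j t)
  -- double counting
  have hsum : ∑ g : {x // x ∈ s} → Bool,
      (Finset.univ.filter (fun j : Fin m => bad j g)).card = m * 2 ^ (n - q) := by
    have : ∑ g : {x // x ∈ s} → Bool, (Finset.univ.filter (fun j : Fin m => bad j g)).card
        = ∑ j : Fin m, (Finset.univ.filter (fun g : {x // x ∈ s} → Bool => bad j g)).card := by
      simp only [Finset.card_filter]
      rw [Finset.sum_comm]
    rw [this]
    simp only [hcount, Finset.sum_const, Finset.card_univ, Fintype.card_fin, smul_eq_mul]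
  -- there is g with few bad clauses
  have hex : ∃ g : {x // x ∈ s} → Bool,
      (Finset.univ.filter (fun j : Fin m => bad j g)).card ≤ m / 2 ^ q := by
    by_contra hcon
    push_neg at hcon
    have hlb : ∀ g : {x // x ∈ s} → Bool,
        m / 2 ^ q + 1 ≤ (Finset.univ.filter (fun j : Fin m => bad j g)).card := by
      intro g; exact hcon g
    have h1 : (2 ^ n) * (m / 2 ^ q + 1) ≤ m * 2 ^ (n - q) := by
      calc (2 ^ n) * (m / 2 ^ q + 1)
          = ∑ _g : {x // x ∈ s} → Bool, (m / 2 ^ q + 1) := by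
            simp only [Finset.sum_const, Finset.card_univ, Fintype.card_fun,
              Fintype.card_bool, smul_eq_mul, hn]
        _ ≤ ∑ g : {x // x ∈ s} → Bool,
              (Finset.univ.filter (fun j : Fin m => bad j g)).card :=
            Finset.sum_le_sum (fun g _ => hlb g)
        _ = m * 2 ^ (n - q) := hsum
    have h2 : (2 : ℕ) ^ n = 2 ^ (n - q) * 2 ^ q := by
      rw [← pow_add]; congr 1; omega
    rw [h2] at h1
    have h3 : 2 ^ q * (m / 2 ^ q + 1) ≤ m := by
      have hp : 0 < 2 ^ (n - q) := Nat.pow_pos (by norm_num)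
      nlinarith [h1, hp]
    have h4 : m < 2 ^ q * (m / 2 ^ q + 1) := by
      have hd := Nat.div_add_mod m (2 ^ q)
      have hr : m % 2 ^ q < 2 ^ q := Nat.mod_lt m (Nat.pow_pos (by norm_num))
      calc m = 2 ^ q * (m / 2 ^ q) + m % 2 ^ q := hd.symm
        _ < 2 ^ q * (m / 2 ^ q) + 2 ^ q := by omega
        _ = 2 ^ q * (m / 2 ^ q + 1) := by ring
    omega
  obtain ⟨g, hg⟩ := hex
  -- the assignment
  refine ⟨fun v => if h : v ∈ s then g ⟨v, h⟩ else false, ?_⟩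
  show m - m / 2 ^ q ≤ (Finset.univ.filter (fun j : Fin m =>
      ∃ t : Fin q, (if h : vars j t ∈ s then g ⟨vars j t, h⟩ else false) = sign j t)).card
  have heq : ∀ j : Fin m,
      (¬ ∃ t : Fin q, (if h : vars j t ∈ s then g ⟨vars j t, h⟩ else false) = sign j t)
        ↔ bad j g := by
    intro j
    push_neg
    constructor
    · intro h t
      have h1 := h t
      rw [dif_pos (hmem j t)] at h1
      exact Bool.eq_not_iff.mpr h1
    · intro h t
      rw [dif_pos (hmem j t), h t]
      exact Bool.not_ne_self (sign j t)
  have hsplit : (Finset.univ.filter (fun j : Fin m =>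
        ∃ t : Fin q, (if h : vars j t ∈ s then g ⟨vars j t, h⟩ else false) = sign j t)).card
      + (Finset.univ.filter (fun j : Fin m => bad j g)).card = m := by
    have := Finset.card_filter_add_card_filter_not (s := (Finset.univ : Finset (Fin m)))
      (p := fun j : Fin m =>
        ∃ t : Fin q, (if h : vars j t ∈ s then g ⟨vars j t, h⟩ else false) = sign j t)
    rw [Finset.card_univ, Fintype.card_fin] at this
    have hfe : (Finset.univ.filter (fun j : Fin m =>
        ¬ ∃ t : Fin q, (if h : vars j t ∈ s then g ⟨vars j t, h⟩ else false) = sign j t))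
        = Finset.univ.filter (fun j : Fin m => bad j g) :=
      Finset.filter_congr (fun j _ => heq j)
    rw [hfe] at this
    exact this
  omega
end

section
/- The edges of every finite simple graph of maximum degree at most 3 can be partitioned into two linear forests. -/
open SimpleGraph Set

section LFAux

variable {V : Type*}

/-- The color class of a coloring given by an edge set `A`. -/
def lfCls (G : SimpleGraph V) (A : Set (Sym2 V)) : SimpleGraph V :=
  SimpleGraph.fromEdgeSet (G.edgeSet ∩ A)

lemma lfCls_adj {G : SimpleGraph V} {A : Set (Sym2 V)} {a b : V} :
    (lfCls G A).Adj a b ↔ G.Adj a b ∧ s(a, b) ∈ A := by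
  simp only [lfCls, fromEdgeSet_adj, Set.mem_inter_iff, mem_edgeSet]
  constructor
  · rintro ⟨⟨h1, h2⟩, _⟩; exact ⟨h1, h2⟩
  · rintro ⟨h1, h2⟩; exact ⟨⟨h1, h2⟩, h1.ne⟩

lemma lfCls_le {G : SimpleGraph V} {A : Set (Sym2 V)} : lfCls G A ≤ G :=
  fun _ _ h => (lfCls_adj.1 h).1

lemma lf_nbr_partition [Fintype V] (G : SimpleGraph V) (A : Set (Sym2 V)) (v : V) :
    ((lfCls G A).neighborSet v).ncard + ((lfCls G Aᶜ).neighborSet v).ncard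
      = (G.neighborSet v).ncard := by
  rw [← Set.ncard_union_eq ?disj (Set.toFinite _) (Set.toFinite _)]
  · congr 1
    ext z
    simp only [Set.mem_union, mem_neighborSet, lfCls_adj, Set.mem_compl_iff]
    tauto
  case disj =>
    rw [Set.disjoint_left]
    intro z hz hz'
    simp only [mem_neighborSet, lfCls_adj, Set.mem_compl_iff] at hz hz'
    exact hz'.2 hz.2

/-- Validity: both color classes have maximum degree at most 2. -/
def lfValid [Fintype V] (G : SimpleGraph V) (A : Set (Sym2 V)) : Prop :=
  ∀ v, ((lfCls G A).neighborSet v).ncard ≤ 2 ∧ ((lfCls G Aᶜ).neighborSet v).ncard ≤ 2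

lemma lfValid_compl [Fintype V] {G : SimpleGraph V} {A : Set (Sym2 V)}
    (h : lfValid G A) : lfValid G Aᶜ := by
  intro v
  refine ⟨(h v).2, ?_⟩
  rw [compl_compl]
  exact (h v).1

/-- The set of vertices lying on some cycle. -/
def lfCycV (H : SimpleGraph V) : Set V := {v | ∃ c : H.Walk v v, c.IsCycle}

noncomputable def lfMu [Fintype V] (G : SimpleGraph V) (A : Set (Sym2 V)) : ℕ :=
  (lfCycV (lfCls G A)).ncard + (lfCycV (lfCls G Aᶜ)).ncard

lemma lfMu_compl [Fintype V] (G : SimpleGraph V) (A : Set (Sym2 V)) :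
    lfMu G Aᶜ = lfMu G A := by
  rw [lfMu, lfMu, compl_compl, Nat.add_comm]

-- cardinality helpers
lemma lf_ncard_le_two [Fintype V] {s : Set V}
    (h : ∀ a ∈ s, ∀ b ∈ s, ∀ c ∈ s, a ≠ b → a ≠ c → b ≠ c → False) : s.ncard ≤ 2 := by
  by_contra hlt
  push_neg at hlt
  obtain ⟨a, b, c, ha, hb, hc, hab, hac, hbc⟩ := (Set.two_lt_ncard_iff (Set.toFinite _)).1 hlt
  exact h a ha b hb c hc hab hac hbc

lemma lf_eq_of_ncard_le_one [Fintype V] {s : Set V} {p q : V} (h : s.ncard ≤ 1)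
    (hp : p ∈ s) (hq : q ∈ s) : p = q :=
  (Set.ncard_le_one (Set.toFinite _)).1 h p hp q hq

lemma lf_mem_pair [Fintype V] {s : Set V} {p q z : V} (h : s.ncard ≤ 2)
    (hp : p ∈ s) (hq : q ∈ s) (hpq : p ≠ q) (hz : z ∈ s) : z = p ∨ z = q := by
  by_contra hcon
  push_neg at hcon
  have : 2 < s.ncard :=
    (Set.two_lt_ncard_iff (Set.toFinite _)).2 ⟨p, q, z, hp, hq, hz, hpq,
      fun h => hcon.1 h.symm, fun h => hcon.2 h.symm⟩
  omega

lemma lf_two_le_ncard [Fintype V] {s : Set V} {p q : V}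
    (hp : p ∈ s) (hq : q ∈ s) (hpq : p ≠ q) : 2 ≤ s.ncard :=
  (Set.one_lt_ncard_iff (Set.toFinite _)).2 ⟨p, q, hp, hq, hpq⟩

end LFAux
section LFAux2

open SimpleGraph Set SimpleGraph.Walk

variable {V : Type*}

lemma lf_cycle_two_nbrs {H : SimpleGraph V} {x : V} {c : H.Walk x x} (hc : c.IsCycle) :
    ∃ y z, y ≠ z ∧ H.Adj x y ∧ H.Adj x z := by
  cases c with
  | nil => exact absurd hc (Walk.IsCycle.not_of_nil)
  | @cons _ y _ h q =>
    have hlen : 2 ≤ q.length := by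
      have := hc.three_le_length
      simp only [Walk.length_cons] at this
      omega
    rw [Walk.cons_isCycle_iff] at hc
    obtain ⟨hq, he⟩ := hc
    have hnn : ¬ q.reverse.Nil := by
      rw [Walk.not_nil_iff_lt_length, Walk.length_reverse]
      omega
    obtain ⟨z, hxz, r, hqr⟩ := Walk.not_nil_iff.mp hnn
    have hez : s(x, z) ∈ q.edges := by
      have : s(x, z) ∈ q.reverse.edges := by
        rw [hqr]; simp
      rwa [Walk.edges_reverse, List.mem_reverse] at this
    refine ⟨y, z, ?_, h, hxz⟩
    rintro rfl
    exact he hez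

lemma lf_two_le_ncard_nbr_of_mem_cycle [Fintype V] {H : SimpleGraph V} {x y : V}
    {c : H.Walk x x} (hc : c.IsCycle) (hy : y ∈ c.support) :
    2 ≤ (H.neighborSet y).ncard := by
  classical
  obtain ⟨a, b, hab, ha, hb⟩ := lf_cycle_two_nbrs (hc.rotate hy)
  exact lf_two_le_ncard (p := a) (q := b) ha hb hab

lemma lf_reach_of_edges {H H2 : SimpleGraph V} {a b : V} (w : H.Walk a b)
    (h : ∀ u v, s(u, v) ∈ w.edges → H2.Reachable u v) : H2.Reachable a b := by
  induction w with
  | nil => exact Reachable.refl _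
  | @cons u v _ hadj p ih =>
    refine (h u v (by simp)).trans (ih fun u' v' hm => h u' v' ?_)
    simp [hm]

lemma lf_reach_support {H H2 : SimpleGraph V} {a b y : V} (w : H.Walk a b)
    (h : ∀ u v, s(u, v) ∈ w.edges → H2.Reachable u v) (hy : y ∈ w.support) :
    H2.Reachable a y := by
  classical
  exact lf_reach_of_edges (w.takeUntil y hy)
    (fun u v hm => h u v (Walk.edges_takeUntil_subset w hy hm))

lemma lf_getVert_mem_support {H : SimpleGraph V} {a b : V} (w : H.Walk a b) (i : ℕ) :
    w.getVert i ∈ w.support := by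
  by_cases hi : i ≤ w.length
  · exact Walk.mem_support_iff_exists_getVert.2 ⟨i, rfl, hi⟩
  · rw [Walk.getVert_of_length_le w (by omega)]
    exact Walk.end_mem_support w

lemma lf_path_getVert_inj {H : SimpleGraph V} {a b : V} {p : H.Walk a b} (hp : p.IsPath) :
    ∀ {i j : ℕ}, i ≤ p.length → j ≤ p.length → p.getVert i = p.getVert j → i = j := by
  induction p with
  | nil => intro i j hi hj _; simp at hi hj; omega
  | @cons u v _ hadj q ih =>
    rw [Walk.cons_isPath_iff] at hp
    obtain ⟨hq, hu⟩ := hp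
    intro i j hi hj hij
    simp only [Walk.length_cons] at hi hj
    match i, j with
    | 0, 0 => rfl
    | 0, (j+1) =>
      exfalso
      rw [Walk.getVert_zero, Walk.getVert_cons_succ] at hij
      exact hu (hij ▸ lf_getVert_mem_support q j)
    | (i+1), 0 =>
      exfalso
      rw [Walk.getVert_zero, Walk.getVert_cons_succ] at hij
      exact hu (hij ▸ lf_getVert_mem_support q i)
    | (i+1), (j+1) =>
      rw [Walk.getVert_cons_succ, Walk.getVert_cons_succ] at hij
      have := ih hq (by omega) (by omega) hij
      omega

lemma lf_no_three_leaves [Fintype V] {H : SimpleGraph V}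
    (hdeg2 : ∀ v, (H.neighborSet v).ncard ≤ 2) {a b c : V}
    (hab : a ≠ b) (hac : a ≠ c) (hbc : b ≠ c)
    (hda : (H.neighborSet a).ncard ≤ 1) (hdb : (H.neighborSet b).ncard ≤ 1)
    (hdc : (H.neighborSet c).ncard ≤ 1)
    (r1 : H.Reachable a b) (r2 : H.Reachable a c) : False := by
  classical
  obtain ⟨w0⟩ := r1
  set P := w0.bypass with hPdef
  have hP : P.IsPath := w0.bypass_isPath
  have hlen : 0 < P.length := by
    rcases Nat.eq_zero_or_pos P.length with h0 | h
    · exact absurd (Walk.eq_of_length_eq_zero h0) hab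
    · exact h
  -- closure property of P's support
  have hcl : ∀ y ∈ P.support, ∀ z, H.Adj y z → z ∈ P.support := by
    intro y hy z hz
    obtain ⟨i, hyi, hi⟩ := Walk.mem_support_iff_exists_getVert.1 hy
    subst hyi
    rcases Nat.eq_zero_or_pos i with rfl | hipos
    · -- y = a
      have hz' : H.Adj a z := by
        have hg : P.getVert 0 = a := Walk.getVert_zero P
        rw [hg] at hz; exact hz
      have h1 : H.Adj a (P.getVert 1) := by
        have := P.adj_getVert_succ (i := 0) hlen
        rwa [Walk.getVert_zero] at this
      have : z = P.getVert 1 :=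
        lf_eq_of_ncard_le_one hda hz' h1
      rw [this]; exact lf_getVert_mem_support P 1
    · rcases Nat.lt_or_ge i P.length with hilt | hige
      · -- interior
        have h1 : H.Adj (P.getVert i) (P.getVert (i-1)) := by
          have := P.adj_getVert_succ (i := i - 1) (by omega)
          have heq : i - 1 + 1 = i := by omega
          rw [heq] at this
          exact this.symm
        have h2 : H.Adj (P.getVert i) (P.getVert (i+1)) := P.adj_getVert_succ hilt
        have hne : P.getVert (i-1) ≠ P.getVert (i+1) := by
          intro heq
          have := lf_path_getVert_inj hP (i := i-1) (j := i+1) (by omega) (by omega) heq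
          omega
        rcases lf_mem_pair (hdeg2 _) h1 h2 hne hz with h | h
        · rw [h]; exact lf_getVert_mem_support P _
        · rw [h]; exact lf_getVert_mem_support P _
      · -- y = b
        have hieq : i = P.length := by omega
        subst hieq
        have hz' : H.Adj b z := by
          have hg : P.getVert P.length = b := Walk.getVert_length P
          rw [hg] at hz; exact hz
        have h1 : H.Adj b (P.getVert (P.length - 1)) := by
          have := P.adj_getVert_succ (i := P.length - 1) (by omega)
          have heq : P.length - 1 + 1 = P.length := by omega
          rw [heq, Walk.getVert_length] at this
          exact this.symm
        have : z = P.getVert (P.length - 1) := lf_eq_of_ncard_le_one hdb hz' h1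
        rw [this]; exact lf_getVert_mem_support P _
  -- c is confined to P's support
  have hconf : ∀ {y cE : V}, y ∈ P.support → (w : H.Walk y cE) → cE ∈ P.support := by
    intro y cE hy w
    induction w with
    | nil => exact hy
    | cons hadj p ih => exact ih (hcl _ hy _ hadj)
  obtain ⟨w2⟩ := r2
  have hcP : c ∈ P.support := hconf P.start_mem_support w2
  obtain ⟨i, hci, hi⟩ := Walk.mem_support_iff_exists_getVert.1 hcP
  have hi0 : i ≠ 0 := by
    rintro rfl
    rw [Walk.getVert_zero] at hci
    exact hac hci
  have hil : i ≠ P.length := by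
    rintro rfl
    rw [Walk.getVert_length] at hci
    exact hbc hci
  -- c is interior, so it has two distinct neighbors
  have h1 : H.Adj c (P.getVert (i-1)) := by
    have := P.adj_getVert_succ (i := i - 1) (by omega)
    have heq : i - 1 + 1 = i := by omega
    rw [heq, hci] at this
    exact this.symm
  have h2 : H.Adj c (P.getVert (i+1)) := by
    have := P.adj_getVert_succ (i := i) (by omega)
    rw [hci] at this
    exact this
  have hne : P.getVert (i-1) ≠ P.getVert (i+1) := by
    intro heq
    have := lf_path_getVert_inj hP (i := i-1) (j := i+1) (by omega) (by omega) heq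
    omega
  have : 2 ≤ (H.neighborSet c).ncard := lf_two_le_ncard h1 h2 hne
  omega

end LFAux2
section LFStep

open SimpleGraph Set SimpleGraph.Walk

variable {V : Type*}

lemma lf_step [Fintype V] {G : SimpleGraph V} (hdeg : ∀ v, (G.neighborSet v).ncard ≤ 3)
    {A : Set (Sym2 V)} (hval : lfValid G A) {x : V} {c : (lfCls G A).Walk x x}
    (hc : c.IsCycle) : ∃ B, lfValid G B ∧ lfMu G B < lfMu G A := by
  classical
  have hd2 : ∀ w, w ∈ c.support → ((lfCls G Aᶜ).neighborSet w).ncard ≤ 1 := by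
    intro w hw
    have h2le := lf_two_le_ncard_nbr_of_mem_cycle hc hw
    have hpart := lf_nbr_partition G A w
    have := hdeg w
    omega
  by_cases hall : ∀ u v, s(u, v) ∈ c.edges → (lfCls G Aᶜ).Reachable u v
  · exfalso
    have hreach : ∀ w ∈ c.support, (lfCls G Aᶜ).Reachable x w :=
      fun w hw => lf_reach_support c hall hw
    cases c with
    | nil => exact absurd hc Walk.IsCycle.not_of_nil
    | @cons _ y _ h q =>
      have hlen3 := hc.three_le_length
      have hq2 : 2 ≤ q.length := by
        simp only [Walk.length_cons] at hlen3; omega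
      have hqpath : q.IsPath := ((Walk.cons_isCycle_iff q h).1 hc).1
      set z2 := q.getVert 1 with hz2def
      have hxy : x ≠ y := h.ne
      have hyz2 : y ≠ z2 := by
        intro heq
        have h0 : q.getVert 0 = y := Walk.getVert_zero q
        have := lf_path_getVert_inj hqpath (i := 0) (j := 1) (by omega) (by omega)
          (by rw [h0, ← hz2def]; exact heq)
        omega
      have hxz2 : x ≠ z2 := by
        intro heq
        have hL : q.getVert q.length = x := Walk.getVert_length q
        have := lf_path_getVert_inj hqpath (i := q.length) (j := 1) (by omega) (by omega)
          (by rw [hL, ← hz2def]; exact heq)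
        omega
      have hy_s : y ∈ (Walk.cons h q).support := by
        rw [Walk.support_cons]
        exact List.mem_cons_of_mem _ q.start_mem_support
      have hz2_s : z2 ∈ (Walk.cons h q).support := by
        rw [Walk.support_cons]
        exact List.mem_cons_of_mem _ (lf_getVert_mem_support q 1)
      have hx_s : x ∈ (Walk.cons h q).support := Walk.start_mem_support _
      exact lf_no_three_leaves (fun v => (hval v).2) hxy hxz2 hyz2
        (hd2 x hx_s) (hd2 y hy_s) (hd2 z2 hz2_s)
        (hreach y hy_s) (hreach z2 hz2_s)
  · push_neg at hall
    obtain ⟨u, v, he, hnr⟩ := hall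
    have hadj1 : (lfCls G A).Adj u v := c.adj_of_mem_edges he
    have hGuv : G.Adj u v := (lfCls_adj.1 hadj1).1
    have heA : s(u, v) ∈ A := (lfCls_adj.1 hadj1).2
    have hus : u ∈ c.support := c.fst_mem_support_of_mem_edges he
    have hvs : v ∈ c.support := c.snd_mem_support_of_mem_edges he
    have hd1u : 2 ≤ ((lfCls G A).neighborSet u).ncard :=
      lf_two_le_ncard_nbr_of_mem_cycle hc hus
    set B := A \ {s(u, v)} with hBdef
    have hBc : ∀ e : Sym2 V, e ∈ Bᶜ ↔ e ∈ Aᶜ ∨ e = s(u, v) := by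
      intro e
      simp only [hBdef, Set.mem_compl_iff, Set.mem_diff, Set.mem_singleton_iff]
      tauto
    have hsubB : ∀ w, (lfCls G B).neighborSet w ⊆ (lfCls G A).neighborSet w := by
      intro w z hz
      rw [mem_neighborSet, lfCls_adj] at hz ⊢
      exact ⟨hz.1, hz.2.1⟩
    have hvalB : lfValid G B := by
      intro w
      constructor
      · exact le_trans (Set.ncard_le_ncard (hsubB w) (Set.toFinite _)) (hval w).1
      · by_cases hwu : w = u
        · have hsub : (lfCls G Bᶜ).neighborSet w ⊆ insert v ((lfCls G Aᶜ).neighborSet w) := by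
            intro z hz
            rw [mem_neighborSet, lfCls_adj] at hz
            rcases (hBc _).1 hz.2 with hm | hm
            · exact Set.mem_insert_of_mem _ (by rw [mem_neighborSet, lfCls_adj]; exact ⟨hz.1, hm⟩)
            · rcases Sym2.eq_iff.1 hm with ⟨h1, h2⟩ | ⟨h1, h2⟩
              · rw [h2]; exact Set.mem_insert _ _
              · exact absurd (hwu.symm.trans h1) hGuv.ne
          have hw1 : ((lfCls G Aᶜ).neighborSet w).ncard ≤ 1 := by
            rw [hwu]; exact hd2 u hus
          calc ((lfCls G Bᶜ).neighborSet w).ncard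
              ≤ (insert v ((lfCls G Aᶜ).neighborSet w)).ncard :=
                Set.ncard_le_ncard hsub (Set.toFinite _)
            _ ≤ ((lfCls G Aᶜ).neighborSet w).ncard + 1 := Set.ncard_insert_le _ _
            _ ≤ 2 := by omega
        · by_cases hwv : w = v
          · have hsub : (lfCls G Bᶜ).neighborSet w ⊆ insert u ((lfCls G Aᶜ).neighborSet w) := by
              intro z hz
              rw [mem_neighborSet, lfCls_adj] at hz
              rcases (hBc _).1 hz.2 with hm | hm
              · exact Set.mem_insert_of_mem _
                  (by rw [mem_neighborSet, lfCls_adj]; exact ⟨hz.1, hm⟩)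
              · rcases Sym2.eq_iff.1 hm with ⟨h1, h2⟩ | ⟨h1, h2⟩
                · exact absurd (h1.symm.trans hwv) hGuv.ne
                · rw [h2]; exact Set.mem_insert _ _
            have hw1 : ((lfCls G Aᶜ).neighborSet w).ncard ≤ 1 := by
              rw [hwv]; exact hd2 v hvs
            calc ((lfCls G Bᶜ).neighborSet w).ncard
                ≤ (insert u ((lfCls G Aᶜ).neighborSet w)).ncard :=
                  Set.ncard_le_ncard hsub (Set.toFinite _)
              _ ≤ ((lfCls G Aᶜ).neighborSet w).ncard + 1 := Set.ncard_insert_le _ _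
              _ ≤ 2 := by omega
          · have heqn : (lfCls G Bᶜ).neighborSet w = (lfCls G Aᶜ).neighborSet w := by
              ext z
              rw [mem_neighborSet, mem_neighborSet, lfCls_adj, lfCls_adj]
              constructor
              · rintro ⟨hadj, hm⟩
                rcases (hBc _).1 hm with hm' | hm'
                · exact ⟨hadj, hm'⟩
                · exfalso
                  rcases Sym2.eq_iff.1 hm' with ⟨h1, h2⟩ | ⟨h1, h2⟩
                  · exact hwu h1
                  · exact hwv h1
              · rintro ⟨hadj, hm⟩
                exact ⟨hadj, (hBc _).2 (Or.inl hm)⟩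
            rw [heqn]
            exact (hval w).2
    have huC : u ∈ lfCycV (lfCls G A) := ⟨c.rotate u hus, hc.rotate hus⟩
    have claim1 : lfCycV (lfCls G B) ⊆ lfCycV (lfCls G A) \ {u} := by
      rintro y ⟨d, hd⟩
      have hle : lfCls G B ≤ lfCls G A := by
        intro a b hab
        rw [lfCls_adj] at hab ⊢
        exact ⟨hab.1, hab.2.1⟩
      have hsub : ∀ e' ∈ d.edges, e' ∈ (lfCls G A).edgeSet :=
        fun e' he' => edgeSet_mono hle (d.edges_subset_edgeSet he')
      refine ⟨⟨d.transfer _ hsub, hd.transfer hsub⟩, ?_⟩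
      intro hy
      rw [Set.mem_singleton_iff] at hy
      subst hy
      have h2le : 2 ≤ ((lfCls G B).neighborSet y).ncard :=
        lf_two_le_ncard_nbr_of_mem_cycle hd d.start_mem_support
      have hsub2 : (lfCls G B).neighborSet y ⊆ (lfCls G A).neighborSet y \ {v} := by
        intro z hz
        rw [mem_neighborSet, lfCls_adj] at hz
        refine ⟨by rw [mem_neighborSet, lfCls_adj]; exact ⟨hz.1, hz.2.1⟩, ?_⟩
        intro hzv
        rw [Set.mem_singleton_iff] at hzv
        subst hzv
        exact hz.2.2 rfl
      have hvA : v ∈ (lfCls G A).neighborSet y := by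
        rw [mem_neighborSet]; exact hadj1
      have := Set.ncard_le_ncard hsub2 (Set.toFinite _)
      rw [Set.ncard_diff_singleton_of_mem hvA] at this
      have := (hval y).1
      omega
    have claim2 : lfCycV (lfCls G Bᶜ) ⊆ lfCycV (lfCls G Aᶜ) := by
      rintro y ⟨d, hd⟩
      by_cases hed : s(u, v) ∈ d.edges
      · exfalso
        obtain ⟨hadj', hreach⟩ :=
          (adj_and_reachable_delete_edges_iff_exists_cycle (G := lfCls G Bᶜ)).2 ⟨y, d, hd, hed⟩
        apply hnr
        refine hreach.mono ?_
        intro a b hab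
        rw [SimpleGraph.deleteEdges, sdiff_adj] at hab
        obtain ⟨hab1, hab2⟩ := hab
        rw [lfCls_adj] at hab1
        rcases (hBc _).1 hab1.2 with hm | hm
        · rw [lfCls_adj]; exact ⟨hab1.1, hm⟩
        · exfalso
          exact hab2 (by rw [fromEdgeSet_adj]; exact ⟨by rw [hm]; rfl, hab1.1.ne⟩)
      · have hsub : ∀ e' ∈ d.edges, e' ∈ (lfCls G Aᶜ).edgeSet := by
          intro e' he'
          have h1 := d.edges_subset_edgeSet he'
          induction e' using Sym2.ind with
          | _ a b =>
            rw [SimpleGraph.mem_edgeSet, lfCls_adj] at h1 ⊢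
            rcases (hBc _).1 h1.2 with hm | hm
            · exact ⟨h1.1, hm⟩
            · exact absurd (hm ▸ he') hed
        exact ⟨d.transfer _ hsub, hd.transfer hsub⟩
    refine ⟨B, hvalB, ?_⟩
    have m1 : (lfCycV (lfCls G B)).ncard ≤ (lfCycV (lfCls G A) \ {u}).ncard :=
      Set.ncard_le_ncard claim1 (Set.toFinite _)
    have m1' : (lfCycV (lfCls G A) \ {u}).ncard < (lfCycV (lfCls G A)).ncard :=
      Set.ncard_diff_singleton_lt_of_mem huC (Set.toFinite _)
    have m2 : (lfCycV (lfCls G Bᶜ)).ncard ≤ (lfCycV (lfCls G Aᶜ)).ncard :=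
      Set.ncard_le_ncard claim2 (Set.toFinite _)
    rw [lfMu, lfMu]
    omega

end LFStep
section LFPhases

open SimpleGraph Set SimpleGraph.Walk

variable {V : Type*}

lemma lf_acyclic_of_cycv_empty [Fintype V] {H : SimpleGraph V}
    (h : (lfCycV H).ncard = 0) : H.IsAcyclic := by
  intro v w hw
  have hv : v ∈ lfCycV H := ⟨w, hw⟩
  rw [Set.ncard_eq_zero (Set.toFinite _)] at h
  rw [h] at hv
  exact hv

lemma lf_phaseB [Fintype V] {G : SimpleGraph V} (hdeg : ∀ v, (G.neighborSet v).ncard ≤ 3) :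
    ∀ (n : ℕ) (A : Set (Sym2 V)), lfValid G A → lfMu G A ≤ n →
      ∃ B, lfValid G B ∧ (lfCls G B).IsAcyclic ∧ (lfCls G Bᶜ).IsAcyclic := by
  intro n
  induction n with
  | zero =>
    intro A hval hmu
    rw [Nat.le_zero, lfMu, Nat.add_eq_zero] at hmu
    exact ⟨A, hval, lf_acyclic_of_cycv_empty hmu.1, lf_acyclic_of_cycv_empty hmu.2⟩
  | succ n ih =>
    intro A hval hmu
    by_cases h1 : (lfCls G A).IsAcyclic
    · by_cases h2 : (lfCls G Aᶜ).IsAcyclic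
      · exact ⟨A, hval, h1, h2⟩
      · unfold SimpleGraph.IsAcyclic at h2
        push_neg at h2
        obtain ⟨x, c, hc⟩ := h2
        obtain ⟨B, hvB, hmuB⟩ := lf_step hdeg (lfValid_compl hval) hc
        rw [lfMu_compl] at hmuB
        exact ih B hvB (by omega)
    · unfold SimpleGraph.IsAcyclic at h1
      push_neg at h1
      obtain ⟨x, c, hc⟩ := h1
      obtain ⟨B, hvB, hmuB⟩ := lf_step hdeg hval hc
      exact ih B hvB (by omega)

lemma lf_phaseA [Fintype V] {G : SimpleGraph V} (hdeg : ∀ v, (G.neighborSet v).ncard ≤ 3) :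
    ∃ A, lfValid G A := by
  classical
  -- maximal matching
  let isM : Finset (Sym2 V) → Prop := fun M => (↑M ⊆ G.edgeSet) ∧
    ∀ e ∈ M, ∀ f ∈ M, e ≠ f → ∀ x : V, x ∈ e → x ∉ f
  let S : Finset (Finset (Sym2 V)) := Finset.univ.filter isM
  have hSne : S.Nonempty := by
    refine ⟨∅, Finset.mem_filter.2 ⟨Finset.mem_univ _, ?_, ?_⟩⟩
    · simp
    · intro e he; simp at he
  obtain ⟨M0, hM0S, hmax⟩ := S.exists_max_image Finset.card hSne
  obtain ⟨hM0E, hM0disj⟩ : isM M0 := (Finset.mem_filter.1 hM0S).2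
  let covered : V → Prop := fun v => ∃ e ∈ M0, v ∈ e
  have haddable : ∀ u v, G.Adj u v → ¬covered u → ¬covered v → False := by
    intro u v huv hu hv
    have hnm : s(u, v) ∉ M0 := fun hmem => hu ⟨_, hmem, Sym2.mem_mk_left u v⟩
    have hins : isM (insert s(u, v) M0) := by
      constructor
      · intro e he
        rw [Finset.coe_insert, Set.mem_insert_iff] at he
        rcases he with rfl | he
        · rwa [SimpleGraph.mem_edgeSet]
        · exact hM0E he
      · intro e he f hf hef x hxe hxf
        rcases Finset.mem_insert.1 he with rfl | he' <;>
          rcases Finset.mem_insert.1 hf with rfl | hf'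
        · exact hef rfl
        · rcases Sym2.mem_iff.1 hxe with rfl | rfl
          · exact hu ⟨f, hf', hxf⟩
          · exact hv ⟨f, hf', hxf⟩
        · rcases Sym2.mem_iff.1 hxf with rfl | rfl
          · exact hu ⟨e, he', hxe⟩
          · exact hv ⟨e, he', hxe⟩
        · exact hM0disj e he' f hf' hef x hxe hxf
    have hle : (insert s(u, v) M0).card ≤ M0.card :=
      hmax _ (Finset.mem_filter.2 ⟨Finset.mem_univ _, hins⟩)
    rw [Finset.card_insert_of_notMem hnm] at hle
    omega
  -- Hall's theorem for uncovered degree-3 vertices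
  let I : Finset V := Finset.univ.filter (fun v => (G.neighborSet v).ncard = 3 ∧ ¬covered v)
  let t : ↥I → Finset V := fun v => (G.neighborSet ↑v).toFinset
  have hall : ∀ s : Finset ↥I, s.card ≤ (s.biUnion t).card := by
    intro s
    have h3 : ∀ w : ↥I, (t w).card = 3 := by
      intro w
      have hw := (Finset.mem_filter.1 w.2).2.1
      rw [← Set.ncard_eq_toFinset_card']
      exact hw
    set N := s.biUnion t with hN
    have key : 3 * s.card ≤ 3 * N.card := by
      have step1 : 3 * s.card = ∑ w ∈ s, (t w).card := by
        rw [Finset.sum_congr rfl (fun w _ => h3 w), Finset.sum_const, smul_eq_mul, mul_comm]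
      have step2 : ∀ w ∈ s, (t w).card = (N.filter (fun u => u ∈ t w)).card := by
        intro w hw
        congr 1
        rw [Finset.filter_mem_eq_inter, Finset.inter_eq_right.2 (Finset.subset_biUnion_of_mem t hw)]
      have step3 : ∑ w ∈ s, (N.filter (fun u => u ∈ t w)).card
          = ∑ u ∈ N, (s.filter (fun w => u ∈ t w)).card := by
        simp_rw [Finset.card_filter]
        exact Finset.sum_comm
      have step4 : ∀ u ∈ N, (s.filter (fun w => u ∈ t w)).card ≤ 3 := by
        intro u _
        have hinj : Set.InjOn (fun w : ↥I => (w : V)) ↑(s.filter (fun w => u ∈ t w)) := by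
          intro a _ b _ hab
          exact Subtype.ext hab
        have hmaps : ∀ w ∈ s.filter (fun w => u ∈ t w), (w : V) ∈ (G.neighborSet u).toFinset := by
          intro w hw
          have := (Finset.mem_filter.1 hw).2
          rw [Set.mem_toFinset] at this ⊢
          exact this.symm
        have := Finset.card_le_card_of_injOn _ hmaps hinj
        rw [← Set.ncard_eq_toFinset_card'] at this
        exact le_trans this (hdeg u)
      calc 3 * s.card = ∑ w ∈ s, (t w).card := step1
        _ = ∑ w ∈ s, (N.filter (fun u => u ∈ t w)).card := Finset.sum_congr rfl step2
        _ = ∑ u ∈ N, (s.filter (fun w => u ∈ t w)).card := step3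
        _ ≤ ∑ _u ∈ N, 3 := Finset.sum_le_sum step4
        _ = 3 * N.card := by rw [Finset.sum_const, smul_eq_mul, mul_comm]
    omega
  obtain ⟨f, hfinj, hft⟩ := (Finset.all_card_le_biUnion_card_iff_exists_injective t).1 hall
  have hfadj : ∀ w : ↥I, G.Adj ↑w (f w) := by
    intro w
    have := hft w
    rwa [Set.mem_toFinset, mem_neighborSet] at this
  have hIuncov : ∀ w : ↥I, ¬covered ↑w := fun w => (Finset.mem_filter.1 w.2).2.2
  have hfcov : ∀ w : ↥I, covered (f w) := by
    intro w
    by_contra hfc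
    exact haddable _ _ (hfadj w) (hIuncov w) hfc
  -- the color class
  let A : Set (Sym2 V) := ↑M0 ∪ {e | ∃ w : ↥I, e = s(↑w, f w)}
  have huniq2 : ∀ e₁ e₂ : Sym2 V, ∀ v : V, v ∈ e₁ → v ∈ e₂ →
      (∃ w : ↥I, e₁ = s(↑w, f w)) → (∃ w : ↥I, e₂ = s(↑w, f w)) → e₁ = e₂ := by
    rintro e₁ e₂ v hv1 hv2 ⟨w, rfl⟩ ⟨w', rfl⟩
    rcases Sym2.mem_iff.1 hv1 with h1 | h1 <;> rcases Sym2.mem_iff.1 hv2 with h2 | h2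
    · have : w = w' := Subtype.ext (h1.symm.trans h2)
      rw [this]
    · exfalso
      have hcw := hfcov w'
      rw [← h2] at hcw
      rw [h1] at hcw
      exact (hIuncov w) hcw
    · exfalso
      have hcw := hfcov w
      rw [← h1] at hcw
      rw [h2] at hcw
      exact (hIuncov w') hcw
    · have : w = w' := hfinj (h1.symm.trans h2)
      rw [this]
  have huniq1 : ∀ e₁ e₂ : Sym2 V, ∀ v : V, v ∈ e₁ → v ∈ e₂ →
      e₁ ∈ M0 → e₂ ∈ M0 → e₁ = e₂ := by
    intro e₁ e₂ v hv1 hv2 h1 h2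
    by_contra hne
    exact hM0disj e₁ h1 e₂ h2 hne v hv1 hv2
  refine ⟨A, fun v => ⟨?_, ?_⟩⟩
  · -- class A bound
    apply lf_ncard_le_two
    intro a ha b hb c hc hab hac hbc
    rw [mem_neighborSet, lfCls_adj] at ha hb hc
    have hedne : ∀ p q : V, G.Adj v p → p ≠ q → s(v, p) ≠ s(v, q) := by
      intro p q hadj hpq heq
      rcases Sym2.eq_iff.1 heq with ⟨_, h2⟩ | ⟨h1, h2⟩
      · exact hpq h2
      · exact hadj.ne' h2
    have hvmem : ∀ p : V, v ∈ s(v, p) := fun p => Sym2.mem_mk_left v p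
    have key : ∀ p q : V, G.Adj v p → G.Adj v q → p ≠ q →
        s(v, p) ∈ A → s(v, q) ∈ A → False ∨ True := fun _ _ _ _ _ _ _ => Or.inr trivial
    -- pigeonhole among three edges in A at v
    rcases ha.2 with ha' | ha' <;> rcases hb.2 with hb' | hb' <;> rcases hc.2 with hc' | hc'
    · exact hedne a b ha.1 hab (huniq1 _ _ v (hvmem a) (hvmem b) ha' hb')
    · exact hedne a b ha.1 hab (huniq1 _ _ v (hvmem a) (hvmem b) ha' hb')
    · exact hedne a c ha.1 hac (huniq1 _ _ v (hvmem a) (hvmem c) ha' hc')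
    · exact hedne b c hb.1 hbc (huniq2 _ _ v (hvmem b) (hvmem c) hb' hc')
    · exact hedne b c hb.1 hbc (huniq1 _ _ v (hvmem b) (hvmem c) hb' hc')
    · exact hedne a c ha.1 hac (huniq2 _ _ v (hvmem a) (hvmem c) ha' hc')
    · exact hedne a b ha.1 hab (huniq2 _ _ v (hvmem a) (hvmem b) ha' hb')
    · exact hedne a b ha.1 hab (huniq2 _ _ v (hvmem a) (hvmem b) ha' hb')
  · -- class Aᶜ bound
    by_cases h3 : (G.neighborSet v).ncard = 3
    · have hex : ∃ u, G.Adj v u ∧ s(v, u) ∈ A := by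
        by_cases hcov : covered v
        · obtain ⟨e, heM, hve⟩ := hcov
          obtain ⟨u, rfl⟩ := Sym2.mem_iff_exists.1 hve
          have hadj : G.Adj v u := by
            have := hM0E heM
            rwa [SimpleGraph.mem_edgeSet] at this
          exact ⟨u, hadj, Or.inl (by exact_mod_cast heM)⟩
        · have hvI : v ∈ I := Finset.mem_filter.2 ⟨Finset.mem_univ _, h3, hcov⟩
          exact ⟨f ⟨v, hvI⟩, hfadj ⟨v, hvI⟩, Or.inr ⟨⟨v, hvI⟩, rfl⟩⟩
      obtain ⟨u, huadj, huA⟩ := hex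
      have hsub : (lfCls G Aᶜ).neighborSet v ⊆ G.neighborSet v \ {u} := by
        intro z hz
        rw [mem_neighborSet, lfCls_adj] at hz
        refine ⟨hz.1, ?_⟩
        intro hzu
        rw [Set.mem_singleton_iff] at hzu
        subst hzu
        exact hz.2 huA
      have hu_mem : u ∈ G.neighborSet v := huadj
      have := Set.ncard_le_ncard hsub (Set.toFinite _)
      rw [Set.ncard_diff_singleton_of_mem hu_mem, h3] at this
      omega
    · have hsub : (lfCls G Aᶜ).neighborSet v ⊆ G.neighborSet v := by
        intro z hz
        rw [mem_neighborSet, lfCls_adj] at hz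
        exact hz.1
      have := Set.ncard_le_ncard hsub (Set.toFinite _)
      have := hdeg v
      omega

end LFPhases
/-- A linear forest: an acyclic graph in which every vertex has degree at most 2
(every connected component is a path). -/
def IsLinearForest {V : Type*} (H : SimpleGraph V) : Prop :=
  H.IsAcyclic ∧ ∀ v : V, (H.neighborSet v).ncard ≤ 2

/-- The edges of every finite simple graph of maximum degree at most 3 can be
partitioned into two linear forests. -/
theorem max_degree_three_two_linear_forests
    {V : Type*} [Fintype V] (G : SimpleGraph V)
    (hdeg : ∀ v : V, (G.neighborSet v).ncard ≤ 3) :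
    ∃ c : Sym2 V → Fin 2, ∀ i : Fin 2,
      IsLinearForest (SimpleGraph.fromEdgeSet {e | e ∈ G.edgeSet ∧ c e = i}) := by
  classical
  obtain ⟨A, hvalA⟩ := lf_phaseA hdeg
  obtain ⟨B, hvalB, hac1, hac2⟩ := lf_phaseB hdeg (lfMu G A) A hvalA le_rfl
  refine ⟨fun e => if e ∈ B then 0 else 1, ?_⟩
  have hset0 : {e | e ∈ G.edgeSet ∧ (if e ∈ B then (0 : Fin 2) else 1) = 0}
      = G.edgeSet ∩ B := by
    ext e
    simp only [Set.mem_setOf_eq, Set.mem_inter_iff]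
    constructor
    · rintro ⟨h1, h2⟩
      refine ⟨h1, ?_⟩
      by_contra hB
      rw [if_neg hB] at h2
      exact absurd h2 (by decide)
    · rintro ⟨h1, h2⟩
      exact ⟨h1, by rw [if_pos h2]⟩
  have hset1 : {e | e ∈ G.edgeSet ∧ (if e ∈ B then (0 : Fin 2) else 1) = 1}
      = G.edgeSet ∩ Bᶜ := by
    ext e
    simp only [Set.mem_setOf_eq, Set.mem_inter_iff, Set.mem_compl_iff]
    constructor
    · rintro ⟨h1, h2⟩
      refine ⟨h1, ?_⟩
      intro hB
      rw [if_pos hB] at h2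
      exact absurd h2 (by decide)
    · rintro ⟨h1, h2⟩
      exact ⟨h1, by rw [if_neg h2]⟩
  intro i
  fin_cases i
  · rw [show (⟨0, by omega⟩ : Fin 2) = (0 : Fin 2) from rfl, hset0]
    exact ⟨hac1, fun v => (hvalB v).1⟩
  · rw [show (⟨1, by omega⟩ : Fin 2) = (1 : Fin 2) from rfl, hset1]
    exact ⟨hac2, fun v => (hvalB v).2⟩
end

section
/- In any d+2 subsequences of the d+2 genomic maps G→, G←, G_1, …, G_d constructed in the reduction from d-Dimensional Matching, every strip consists of exactly one pair of edge markers ⟨i_left, i_right⟩ for a single index i; in particular no strip contains markers of two different indices. -/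
/-- The map `G→`: the pairs of edge markers `(2i+1, 2i+2)` for `0 ≤ i < n`,
listed with ascending indices, i.e. `[1, 2, 3, 4, …, 2n-1, 2n]`. -/
def Gright (n : ℕ) : List ℕ :=
  (List.range n).flatMap (fun i => [2 * i + 1, 2 * i + 2])

/-- The map `G←`: the pairs of edge markers listed with descending indices,
i.e. `[2n-1, 2n, …, 3, 4, 1, 2]`. -/
def Gleft (n : ℕ) : List ℕ :=
  (List.range n).reverse.flatMap (fun i => [2 * i + 1, 2 * i + 2])

lemma Gright_succ (n : ℕ) : Gright (n + 1) = Gright n ++ [2 * n + 1, 2 * n + 2] := by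
  simp [Gright, List.range_succ]

lemma Gleft_succ (n : ℕ) : Gleft (n + 1) = [2 * n + 1, 2 * n + 2] ++ Gleft n := by
  simp [Gleft, List.range_succ]

lemma mem_Gright {n x : ℕ} (h : x ∈ Gright n) : 1 ≤ x ∧ x ≤ 2 * n := by
  simp only [Gright, List.mem_flatMap, List.mem_range] at h
  obtain ⟨i, hi, hx⟩ := h
  simp at hx
  omega

lemma mem_Gleft {n x : ℕ} (h : x ∈ Gleft n) : 1 ≤ x ∧ x ≤ 2 * n := by
  simp only [Gleft, List.mem_flatMap, List.mem_reverse, List.mem_range] at h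
  obtain ⟨i, hi, hx⟩ := h
  simp at hx
  omega

lemma pairwise_Gright (n : ℕ) : (Gright n).Pairwise (· < ·) := by
  induction n with
  | zero => simp [Gright]
  | succ n ih =>
    rw [Gright_succ, List.pairwise_append]
    refine ⟨ih, by simp, ?_⟩
    intro x hx y hy
    have := mem_Gright hx
    simp at hy
    omega

lemma sublist_pair {a b : ℕ} {l : List ℕ} (h : l.Sublist [a, b]) :
    l = [] ∨ l = [a] ∨ l = [b] ∨ l = [a, b] := by
  cases h with
  | cons =>
    rename_i h
    rcases List.sublist_singleton.mp h with h | h <;> simp [h]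
  | cons_cons =>
    rename_i h
    rcases List.sublist_singleton.mp h with h | h <;> simp_all

/-- In the reduction from d-Dimensional Matching, any strip of subsequences of the
genomic maps `G→, G←, G_1, …, G_d` is in particular a common subsequence of `G→` and
`G←`; every such common subsequence of length at least two consists of the single pair
of edge markers of one index: it equals `[2i+1, 2i+2]` for some `i < n`. In particular
no strip contains markers of two different indices. -/
theorem strip_is_single_pair (n : ℕ) (l : List ℕ)
    (h1 : l.Sublist (Gright n)) (h2 : l.Sublist (Gleft n)) (hlen : 2 ≤ l.length) :
    ∃ i < n, l = [2 * i + 1, 2 * i + 2] := by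
  induction n generalizing l with
  | zero => simp [Gright] at h1; simp [h1] at hlen
  | succ n ih =>
    have hs : l.Pairwise (· < ·) := (pairwise_Gright (n+1)).sublist h1
    rw [Gleft_succ] at h2
    obtain ⟨l1, l2, rfl, hl1, hl2⟩ := List.sublist_append_iff.mp h2
    have hl2le : ∀ x ∈ l2, x ≤ 2 * n := fun x hx => (mem_Gleft (hl2.mem hx)).2
    rcases sublist_pair hl1 with rfl | rfl | rfl | rfl
    · -- l = l2, all elements ≤ 2n
      simp only [List.nil_append] at *
      rw [Gright_succ] at h1
      obtain ⟨m1, m2, heq, hm1, hm2⟩ := List.sublist_append_iff.mp h1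
      have hm2nil : m2 = [] := by
        rcases sublist_pair hm2 with rfl | rfl | rfl | rfl
        · rfl
        all_goals {
          exfalso
          have : 2 * n + 1 ∈ l2 ∨ 2 * n + 2 ∈ l2 := by
            rw [heq]; simp
          rcases this with h | h <;> have := hl2le _ h <;> omega }
      subst hm2nil
      simp only [List.append_nil] at heq
      subst heq
      obtain ⟨i, hi, hl⟩ := ih l2 hm1 hl2 hlen
      exact ⟨i, by omega, hl⟩
    · -- l = (2n+1) :: l2
      have : l2 = [] := by
        cases l2 with
        | nil => rfl
        | cons x xs =>
          exfalso
          have hlt : 2 * n + 1 < x := by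
            have := List.pairwise_cons.mp hs
            exact this.1 x (by simp)
          have := hl2le x (by simp)
          omega
      simp [this] at hlen
    · have : l2 = [] := by
        cases l2 with
        | nil => rfl
        | cons x xs =>
          exfalso
          have hlt : 2 * n + 2 < x := by
            have := List.pairwise_cons.mp hs
            exact this.1 x (by simp)
          have := hl2le x (by simp)
          omega
      simp [this] at hlen
    · have : l2 = [] := by
        cases l2 with
        | nil => rfl
        | cons x xs =>
          exfalso
          have hlt : 2 * n + 2 < x := by
            simp only [List.cons_append, List.pairwise_cons] at hs
            exact hs.2.1 x (by simp)
          have := hl2le x (by simp)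
          omega
      subst this
      exact ⟨n, by omega, by simp⟩
end
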